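/- Let G be a bipartite graph on parts A and B of equal finite cardinality, in which every vertex (on either side) has degree at most m. Then the edge set of G can be covered by (the graphs of) m bijections from A to B; that is, there exist bijections h_1, …, h_m : A ≃ B such that every edge (a,b) of G satisfies h_k(a) = b for some k. -/

import Mathlib

open Finset

private lemma double_count {A B : Type*} (E : A → B → Prop)
    [∀ a, DecidablePred (E a)] [∀ b, DecidablePred (fun a => E a b)]
    (S : Finset A) (T : Finset B) :
    ∑ a ∈ S, (T.filter (fun b => E a b)).card
      = ∑ b ∈ T, (S.filter (fun a => E a b)).card := by
  simp_rw [Finset.card_filter]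
  exact Finset.sum_comm

private lemma cover_aux {A B : Type*} [Fintype A] [Fintype B]
    (hcard : Fintype.card A = Fintype.card B) :
    ∀ (m : ℕ) (E : A → B → Prop) (dE : ∀ a b, Decidable (E a b)),
      (∀ a, (@Finset.filter B (fun b => E a b) (fun b => dE a b) Finset.univ).card ≤ m) →
      (∀ b, (@Finset.filter A (fun a => E a b) (fun a => dE a b) Finset.univ).card ≤ m) →
      ∃ h : Fin m → (A ≃ B), ∀ a b, E a b → ∃ k, h k a = b := by
  intro m
  induction m with
  | zero =>
    intro E dE hA _
    refine ⟨Fin.elim0, fun a b hab => ?_⟩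
    exfalso
    have hmem : b ∈ @Finset.filter B (fun b => E a b) (fun b => dE a b) Finset.univ := by
      simp only [Finset.mem_filter, Finset.mem_univ, true_and]; exact hab
    have := Finset.card_pos.mpr ⟨b, hmem⟩
    have := hA a
    omega
  | succ n ih =>
    intro E dE hA hB
    classical
    have hA1 : ∀ a, (Finset.univ.filter (fun b => E a b)).card ≤ n + 1 := by
      intro a; have := hA a; rwa [Finset.filter_congr_decidable] at this
    have hB1 : ∀ b, (Finset.univ.filter (fun a => E a b)).card ≤ n + 1 := by
      intro b; have := hB b; rwa [Finset.filter_congr_decidable] at this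
    -- the padded relation
    have hall : ∀ S : Finset A,
        S.card ≤ (Finset.univ.filter (fun b => ∃ a ∈ S,
          (E a b ∨ ((Finset.univ.filter (fun b' => E a b')).card < n + 1
            ∧ (Finset.univ.filter (fun a' => E a' b)).card < n + 1)))).card := by
      intro S
      have hNsub : Finset.univ.filter (fun b => ∃ a ∈ S, E a b)
          ⊆ Finset.univ.filter (fun b => ∃ a ∈ S,
            (E a b ∨ ((Finset.univ.filter (fun b' => E a b')).card < n + 1
              ∧ (Finset.univ.filter (fun a' => E a' b)).card < n + 1))) := by
        apply Finset.monotone_filter_right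
        intro b _ hb
        obtain ⟨a, haS, hE⟩ := hb
        exact ⟨a, haS, Or.inl hE⟩
      by_cases hfull : ∀ a ∈ S, (Finset.univ.filter (fun b => E a b)).card = n + 1
      · -- all degrees in S equal n+1
        have e1 : ∀ a ∈ S,
            (Finset.univ.filter (fun b => E a b))
              = (Finset.univ.filter (fun b => ∃ a' ∈ S, E a' b)).filter
                  (fun b => E a b) := by
          intro a ha
          ext b
          simp only [Finset.mem_filter, Finset.mem_univ, true_and]
          exact ⟨fun h => ⟨⟨a, ha, h⟩, h⟩, fun h => h.2⟩
        have key : (n + 1) * S.card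
            ≤ (n + 1) * (Finset.univ.filter (fun b => ∃ a ∈ S, E a b)).card := by
          calc (n + 1) * S.card = ∑ a ∈ S, (n + 1) := by
                rw [Finset.sum_const, smul_eq_mul, mul_comm]
            _ = ∑ a ∈ S, (Finset.univ.filter (fun b => E a b)).card :=
                Finset.sum_congr rfl (fun a ha => (hfull a ha).symm)
            _ = ∑ a ∈ S, ((Finset.univ.filter (fun b => ∃ a' ∈ S, E a' b)).filter
                  (fun b => E a b)).card :=
                Finset.sum_congr rfl (fun a ha => congrArg Finset.card (e1 a ha))
            _ = ∑ b ∈ Finset.univ.filter (fun b => ∃ a' ∈ S, E a' b),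
                  (S.filter (fun a => E a b)).card := double_count E S _
            _ ≤ ∑ b ∈ Finset.univ.filter (fun b => ∃ a' ∈ S, E a' b), (n + 1) := by
                refine Finset.sum_le_sum (fun b _ => ?_)
                exact le_trans (Finset.card_le_card
                  (Finset.filter_subset_filter _ (Finset.subset_univ S))) (hB1 b)
            _ = (n + 1) * (Finset.univ.filter (fun b => ∃ a ∈ S, E a b)).card := by
                rw [Finset.sum_const, smul_eq_mul, mul_comm]
        have hle : S.card ≤ (Finset.univ.filter (fun b => ∃ a ∈ S, E a b)).card :=
          Nat.le_of_mul_le_mul_left key (Nat.succ_pos n)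
        exact le_trans hle (Finset.card_le_card hNsub)
      · -- some vertex in S has degree < n+1
        push_neg at hfull
        obtain ⟨a₀, ha₀S, ha₀⟩ := hfull
        have ha₀lt : (Finset.univ.filter (fun b => E a₀ b)).card < n + 1 :=
          lt_of_le_of_ne (hA1 a₀) ha₀
        set Bs := Finset.univ.filter
          (fun b => (Finset.univ.filter (fun a' => E a' b)).card < n + 1) with hBsdef
        set N := Finset.univ.filter (fun b => ∃ a ∈ S, E a b) with hNdef
        set T := Finset.univ \ (Bs ∪ N) with hTdef
        have hTmem : ∀ b ∈ T,
            (Finset.univ.filter (fun a' => E a' b)).card = n + 1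
              ∧ ∀ a ∈ S, ¬ E a b := by
          intro b hb
          rw [hTdef, hBsdef, hNdef] at hb
          simp only [Finset.mem_sdiff, Finset.mem_union, Finset.mem_filter,
            Finset.mem_univ, true_and] at hb
          push_neg at hb
          obtain ⟨h1, h2⟩ := hb
          refine ⟨?_, fun a ha hE => h2 a ha hE⟩
          have := hB1 b
          omega
        have e2 : ∀ b ∈ T, Finset.univ.filter (fun a => E a b)
            = (Finset.univ \ S).filter (fun a => E a b) := by
          intro b hb
          ext a
          simp only [Finset.mem_filter, Finset.mem_univ, true_and, Finset.mem_sdiff]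
          constructor
          · intro h
            exact ⟨fun haS => (hTmem b hb).2 a haS h, h⟩
          · intro h; exact h.2
        have key : (n + 1) * T.card ≤ (n + 1) * (Finset.univ \ S).card := by
          calc (n + 1) * T.card = ∑ b ∈ T, (n + 1) := by
                rw [Finset.sum_const, smul_eq_mul, mul_comm]
            _ = ∑ b ∈ T, (Finset.univ.filter (fun a => E a b)).card :=
                Finset.sum_congr rfl (fun b hb => ((hTmem b hb).1).symm)
            _ = ∑ b ∈ T, ((Finset.univ \ S).filter (fun a => E a b)).card :=
                Finset.sum_congr rfl (fun b hb => congrArg Finset.card (e2 b hb))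
            _ = ∑ a ∈ Finset.univ \ S, (T.filter (fun b => E a b)).card :=
                (double_count E (Finset.univ \ S) T).symm
            _ ≤ ∑ a ∈ Finset.univ \ S, (n + 1) := by
                refine Finset.sum_le_sum (fun a _ => ?_)
                exact le_trans (Finset.card_le_card
                  (Finset.filter_subset_filter _ (Finset.subset_univ T))) (hA1 a)
            _ = (n + 1) * (Finset.univ \ S).card := by
                rw [Finset.sum_const, smul_eq_mul, mul_comm]
        have hT1 : T.card ≤ (Finset.univ \ S).card :=
          Nat.le_of_mul_le_mul_left key (Nat.succ_pos n)
        have hT2 : T.card = Fintype.card B - (Bs ∪ N).card := by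
          rw [hTdef, Finset.card_univ_diff]
        have hT3 : (Finset.univ \ S).card = Fintype.card A - S.card :=
          Finset.card_univ_diff S
        have hScard : S.card ≤ Fintype.card A := Finset.card_le_univ S
        have hUcard : (Bs ∪ N).card ≤ Fintype.card B := Finset.card_le_univ _
        have hUNsub : Bs ∪ N ⊆ Finset.univ.filter (fun b => ∃ a ∈ S,
            (E a b ∨ ((Finset.univ.filter (fun b' => E a b')).card < n + 1
              ∧ (Finset.univ.filter (fun a' => E a' b)).card < n + 1))) := by
          refine Finset.union_subset ?_ hNsub
          intro b hb
          rw [hBsdef] at hb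
          simp only [Finset.mem_filter, Finset.mem_univ, true_and] at hb ⊢
          exact ⟨a₀, ha₀S, Or.inr ⟨ha₀lt, hb⟩⟩
        have hfin := Finset.card_le_card hUNsub
        omega
    -- Hall's theorem gives a bijection
    obtain ⟨f, finj, hf⟩ := (Fintype.all_card_le_filter_rel_iff_exists_injective
      (fun a b => E a b ∨ ((Finset.univ.filter (fun b' => E a b')).card < n + 1
        ∧ (Finset.univ.filter (fun a' => E a' b)).card < n + 1))).mp hall
    have fbij : Function.Bijective f :=
      (Fintype.bijective_iff_injective_and_card f).mpr ⟨finj, hcard⟩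
    set h₀ : A ≃ B := Equiv.ofBijective f fbij with hh₀
    have hR : ∀ a, E a (h₀ a) ∨ ((Finset.univ.filter (fun b' => E a b')).card < n + 1
        ∧ (Finset.univ.filter (fun a' => E a' (h₀ a))).card < n + 1) := hf
    have hEa : ∀ a, (Finset.univ.filter (fun b => E a b)).card = n + 1 → E a (h₀ a) := by
      intro a hd
      rcases hR a with h | h
      · exact h
      · exact absurd h.1 (by omega)
    have hEb : ∀ b, (Finset.univ.filter (fun a => E a b)).card = n + 1
        → E (h₀.symm b) b := by
      intro b hd
      have h := hR (h₀.symm b)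
      rw [Equiv.apply_symm_apply] at h
      rcases h with h | h
      · exact h
      · exact absurd h.2 (by omega)
    -- the residual graph
    have hA2 : ∀ a, (Finset.univ.filter (fun b => E a b ∧ h₀ a ≠ b)).card ≤ n := by
      intro a
      by_cases hd : (Finset.univ.filter (fun b => E a b)).card = n + 1
      · have hmem : h₀ a ∈ Finset.univ.filter (fun b => E a b) := by
          simp only [Finset.mem_filter, Finset.mem_univ, true_and]
          exact hEa a hd
        have hsub : Finset.univ.filter (fun b => E a b ∧ h₀ a ≠ b)
            ⊆ (Finset.univ.filter (fun b => E a b)).erase (h₀ a) := by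
          intro b hb
          simp only [Finset.mem_filter, Finset.mem_univ, true_and] at hb
          refine Finset.mem_erase.mpr ⟨fun hbe => hb.2 hbe.symm, ?_⟩
          simp only [Finset.mem_filter, Finset.mem_univ, true_and]
          exact hb.1
        have h1 := Finset.card_le_card hsub
        rw [Finset.card_erase_of_mem hmem, hd] at h1
        omega
      · have hlt : (Finset.univ.filter (fun b => E a b)).card ≤ n := by
          have := hA1 a; omega
        have hsub : Finset.univ.filter (fun b => E a b ∧ h₀ a ≠ b)
            ⊆ Finset.univ.filter (fun b => E a b) :=
          Finset.monotone_filter_right _ (fun b _ hb => hb.1)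
        exact le_trans (Finset.card_le_card hsub) hlt
    have hB2 : ∀ b, (Finset.univ.filter (fun a => E a b ∧ h₀ a ≠ b)).card ≤ n := by
      intro b
      by_cases hd : (Finset.univ.filter (fun a => E a b)).card = n + 1
      · have hmem : h₀.symm b ∈ Finset.univ.filter (fun a => E a b) := by
          simp only [Finset.mem_filter, Finset.mem_univ, true_and]
          exact hEb b hd
        have hsub : Finset.univ.filter (fun a => E a b ∧ h₀ a ≠ b)
            ⊆ (Finset.univ.filter (fun a => E a b)).erase (h₀.symm b) := by
          intro a ha
          simp only [Finset.mem_filter, Finset.mem_univ, true_and] at ha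
          refine Finset.mem_erase.mpr ⟨fun hae => ?_, ?_⟩
          · apply ha.2
            rw [hae, Equiv.apply_symm_apply]
          · simp only [Finset.mem_filter, Finset.mem_univ, true_and]
            exact ha.1
        have h1 := Finset.card_le_card hsub
        rw [Finset.card_erase_of_mem hmem, hd] at h1
        omega
      · have hlt : (Finset.univ.filter (fun a => E a b)).card ≤ n := by
          have := hB1 b; omega
        have hsub : Finset.univ.filter (fun a => E a b ∧ h₀ a ≠ b)
            ⊆ Finset.univ.filter (fun a => E a b) :=
          Finset.monotone_filter_right _ (fun a _ ha => ha.1)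
        exact le_trans (Finset.card_le_card hsub) hlt
    obtain ⟨h', hcov⟩ := ih (fun a b => E a b ∧ h₀ a ≠ b)
      (fun a b => Classical.propDecidable _)
      (by intro a; rw [Finset.filter_congr_decidable]; exact hA2 a)
      (by intro b; rw [Finset.filter_congr_decidable]; exact hB2 b)
    refine ⟨Fin.cons h₀ h', fun a b hab => ?_⟩
    by_cases hb : h₀ a = b
    · exact ⟨0, by simpa using hb⟩
    · obtain ⟨k, hk⟩ := hcov a b ⟨hab, hb⟩
      exact ⟨k.succ, by simpa using hk⟩

/-- A bipartite graph on parts of equal finite cardinality with all degrees at most `m`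
can be covered by `m` bijections. -/
theorem cover_by_bijections {A B : Type*} [Fintype A] [Fintype B]
    (hcard : Fintype.card A = Fintype.card B) (m : ℕ)
    (E : A → B → Prop) [∀ a, DecidablePred (E a)]
    (hA : ∀ a, (Finset.univ.filter (fun b => E a b)).card ≤ m)
    (hB : ∀ b, (Finset.univ.filter (fun a => E a b)).card ≤ m) :
    ∃ h : Fin m → (A ≃ B), ∀ a b, E a b → ∃ k, h k a = b := by
  refine cover_aux hcard m E (fun a b => inferInstance) ?_ ?_
  · intro a
    rw [Finset.filter_congr_decidable]
    exact hA a
  · intro b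
    rw [Finset.filter_congr_decidable]
    exact hB b
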